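/- Consider the tridiagonal operator A on l²(ℤ) defined, for parameters α ∈ ℝ and β ≥ 0, by (Av)_i = (α−β)v_{i−1} + (1+2β)v_i − (α+β)v_{i+1}. Then A is invertible as a bounded operator on l²(ℤ) and ‖A^{-1}‖ ≤ 1. -/

import Mathlib

open RealInnerProductSpace ENNReal

noncomputable section TridiagAux

set_option maxHeartbeats 1000000

private lemma tridiag_shift_memℓp (v : lp (fun _ : ℤ => ℝ) 2) :
    Memℓp (fun i : ℤ => (v : ℤ → ℝ) (i + 1)) 2 := by
  have hp : 0 < (2 : ℝ≥0∞).toReal := by norm_num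
  have h : Summable fun i : ℤ => ‖(v : ℤ → ℝ) i‖ ^ (2 : ℝ≥0∞).toReal :=
    (lp.memℓp v).summable hp
  apply memℓp_gen
  exact (Equiv.addRight (1 : ℤ)).summable_iff.2 h

private def tridiagShift (v : lp (fun _ : ℤ => ℝ) 2) : lp (fun _ : ℤ => ℝ) 2 :=
  ⟨fun i => (v : ℤ → ℝ) (i + 1), tridiag_shift_memℓp v⟩

private lemma tridiag_summable_sq (v : lp (fun _ : ℤ => ℝ) 2) :
    Summable fun i : ℤ => (v : ℤ → ℝ) i * (v : ℤ → ℝ) i := by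
  have := lp.summable_inner (𝕜 := ℝ) v v
  exact (by simpa [RCLike.inner_apply] using this : Summable fun i : ℤ => (v : ℤ → ℝ) i ^ 2).congr fun i => sq _

private lemma tridiag_summable_cross (v : lp (fun _ : ℤ => ℝ) 2) :
    Summable fun i : ℤ => (v : ℤ → ℝ) i * (v : ℤ → ℝ) (i + 1) := by
  have := lp.summable_inner (𝕜 := ℝ) v (tridiagShift v)
  exact (by simpa [RCLike.inner_apply, tridiagShift] using this : Summable fun i : ℤ => (v : ℤ → ℝ) (i + 1) * (v : ℤ → ℝ) i).congr fun i => mul_comm _ _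

private lemma tridiag_key (v : lp (fun _ : ℤ => ℝ) 2) :
    (∑' i : ℤ, (v : ℤ → ℝ) i * (v : ℤ → ℝ) (i + 1)) ≤
      ∑' i : ℤ, (v : ℤ → ℝ) i * (v : ℤ → ℝ) i := by
  set w : ℤ → ℝ := (v : ℤ → ℝ)
  have hsq := tridiag_summable_sq v
  have hcross := tridiag_summable_cross v
  have hsq' : Summable fun i : ℤ => w (i + 1) * w (i + 1) :=
    (Equiv.addRight (1 : ℤ)).summable_iff.2 hsq
  have hT' : (∑' i : ℤ, w (i + 1) * w (i + 1)) = ∑' i : ℤ, w i * w i :=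
    Equiv.tsum_eq (Equiv.addRight (1 : ℤ)) (fun i => w i * w i)
  have h2 : ∀ i : ℤ, 2 * (w i * w (i + 1)) ≤ w i * w i + w (i + 1) * w (i + 1) := by
    intro i; nlinarith [sq_nonneg (w i - w (i + 1))]
  have hle : (∑' i : ℤ, 2 * (w i * w (i + 1))) ≤
      ∑' i : ℤ, (w i * w i + w (i + 1) * w (i + 1)) :=
    Summable.tsum_le_tsum h2 (hcross.mul_left 2) (hsq.add hsq')
  rw [tsum_mul_left, Summable.tsum_add hsq hsq', hT'] at hle
  linarith

end TridiagAux

/-- The implicit centered finite-difference operator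
(Av)_i = (α−β)v_{i−1} + (1+2β)v_i − (α+β)v_{i+1} on l²(ℤ), with α ∈ ℝ, β ≥ 0,
is invertible as a bounded operator with ‖A⁻¹‖ ≤ 1. -/
theorem tridiag_centered_invertible_l2
    (α β : ℝ) (hβ : 0 ≤ β)
    (A : lp (fun _ : ℤ => ℝ) 2 →L[ℝ] lp (fun _ : ℤ => ℝ) 2)
    (hA : ∀ (v : lp (fun _ : ℤ => ℝ) 2) (i : ℤ),
      (A v : ∀ _ : ℤ, ℝ) i =
        (α - β) * (v : ∀ _ : ℤ, ℝ) (i - 1) + (1 + 2 * β) * (v : ∀ _ : ℤ, ℝ) i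
          - (α + β) * (v : ∀ _ : ℤ, ℝ) (i + 1)) :
    ∃ B : lp (fun _ : ℤ => ℝ) 2 →L[ℝ] lp (fun _ : ℤ => ℝ) 2,
      A.comp B = ContinuousLinearMap.id ℝ _ ∧
      B.comp A = ContinuousLinearMap.id ℝ _ ∧
      ‖B‖ ≤ 1 := by
  classical
  set H := lp (fun _ : ℤ => ℝ) 2
  -- coercivity
  have key : ∀ v : H, ‖v‖ * ‖v‖ ≤ (inner ℝ (A v) v : ℝ) := by
    intro v
    set w : ℤ → ℝ := (v : ℤ → ℝ) with hw
    have hsq := tridiag_summable_sq v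
    have hcross := tridiag_summable_cross v
    have hcross' : Summable fun i : ℤ => w (i - 1) * w i := by
      apply ((Equiv.addRight (1 : ℤ)).summable_iff).1
      have : ((fun i : ℤ => w (i - 1) * w i) ∘ (Equiv.addRight (1 : ℤ)))
          = fun j : ℤ => w j * w (j + 1) := by
        funext j; simp
      rw [this]; exact hcross
    set T : ℝ := ∑' i : ℤ, w i * w i with hT
    set s : ℝ := ∑' i : ℤ, w i * w (i + 1) with hs
    have hs1 : (∑' i : ℤ, w (i - 1) * w i) = s := by
      rw [← Equiv.tsum_eq (Equiv.addRight (1 : ℤ)) (fun i : ℤ => w (i - 1) * w i)]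
      apply tsum_congr; intro j; simp
    have hsT : s ≤ T := tridiag_key v
    have hnorm : ‖v‖ * ‖v‖ = T := by
      rw [← real_inner_self_eq_norm_mul_norm, lp.inner_eq_tsum]
      exact tsum_congr fun i => by simp [RCLike.inner_apply, hw, sq]
    have hAvv : (inner ℝ (A v) v : ℝ) =
        ∑' i : ℤ, ((α - β) * (w (i - 1) * w i) + (1 + 2 * β) * (w i * w i)
          - (α + β) * (w i * w (i + 1))) := by
      rw [lp.inner_eq_tsum]
      apply tsum_congr; intro i
      have := hA v i
      simp only [RCLike.inner_apply, conj_trivial]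
      rw [this]; ring
    have hsum1 : Summable fun i : ℤ => (α - β) * (w (i - 1) * w i)
        + (1 + 2 * β) * (w i * w i) :=
      (hcross'.mul_left _).add (hsq.mul_left _)
    rw [hAvv, Summable.tsum_sub (hsum1) (hcross.mul_left _), Summable.tsum_add (hcross'.mul_left _)
      (hsq.mul_left _), tsum_mul_left, tsum_mul_left, tsum_mul_left, hs1, ← hT, ← hs, hnorm]
    nlinarith [mul_nonneg hβ (sub_nonneg.2 hsT)]
  -- Lax-Milgram
  let Bform : H →L[ℝ] H →L[ℝ] ℝ := (innerSL ℝ).comp A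
  have hcoercive : IsCoercive Bform := ⟨1, one_pos, fun u => by
    simpa [Bform] using key u⟩
  let E := hcoercive.continuousLinearEquivOfBilin
  have hAE : ∀ v : H, A v = E v := by
    intro v
    exact hcoercive.unique_continuousLinearEquivOfBilin (fun w => rfl)
  refine ⟨E.symm.toContinuousLinearMap, ?_, ?_, ?_⟩
  · refine ContinuousLinearMap.ext fun y => ?_
    show A (E.symm y) = y
    rw [hAE]
    exact E.apply_symm_apply y
  · refine ContinuousLinearMap.ext fun v => ?_
    show E.symm (A v) = v
    rw [hAE]
    exact E.symm_apply_apply v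
  · apply ContinuousLinearMap.opNorm_le_bound _ zero_le_one
    intro y
    set u : H := E.symm y with hu
    have hAu : A u = y := by rw [hAE]; exact E.apply_symm_apply y
    have h1 : ‖u‖ * ‖u‖ ≤ (inner ℝ (A u) u : ℝ) := key u
    have h2 : (inner ℝ (A u) u : ℝ) ≤ ‖y‖ * ‖u‖ := by
      rw [hAu]; exact real_inner_le_norm y u
    have := norm_nonneg u
    have := norm_nonneg y
    show ‖u‖ ≤ 1 * ‖y‖
    nlinarith
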